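/- Let (Ω, F, P) be a finite probability space and let Y_0, Y_1, …, Y_n be a martingale with respect to a filter F_0 ⊆ F_1 ⊆ ⋯ ⊆ F_n of σ-subfields of F with F_0 = {∅, Ω}. Suppose that Σ_{j=1}^n ( ran(Y_j | F_{j−1}) )² ≤ r̂² almost surely, for some real r̂. Then for any real t > 0, P( |Y_n − Y_0| ≥ t ) ≤ 2·exp( −2t²/r̂² ). -/

import Mathlib

open MeasureTheory

/-- The atom of the σ-field `m'` containing `ω` (on a finite space this is the smallest
`m'`-measurable set containing `ω`). -/
def condAtom {Ω : Type*} (m' : MeasurableSpace Ω) (ω : Ω) : Set Ω :=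
  ⋂₀ {s | MeasurableSet[m'] s ∧ ω ∈ s}

/-- The conditional range `ran(f ∣ m') = ess sup(f ∣ m') + ess sup(−f ∣ m')`: on the atom
of `m'` containing `ω`, the essential supremum of `f` (resp. `−f`) over that atom, i.e. the
supremum of the values of `f` (resp. `−f`) at the points of the atom of positive measure. -/
noncomputable def condRange {Ω : Type*} [MeasurableSpace Ω] (μ : Measure Ω)
    (m' : MeasurableSpace Ω) (f : Ω → ℝ) (ω : Ω) : ℝ :=
  sSup {y | ∃ ω' ∈ condAtom m' ω, μ {ω'} ≠ 0 ∧ f ω' = y} +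
  sSup {y | ∃ ω' ∈ condAtom m' ω, μ {ω'} ≠ 0 ∧ -f ω' = y}


set_option linter.unusedSectionVars false
set_option maxHeartbeats 1000000
open Real in
lemma hoeff_core {p : ℝ} (hp0 : 0 ≤ p) (hp1 : p ≤ 1) (u : ℝ) :
    1 - p + p * Real.exp u ≤ Real.exp (u ^ 2 / 8 + p * u) := by
  have hD : ∀ x : ℝ, 0 < 1 - p + p * Real.exp x := by
    intro x
    rcases eq_or_lt_of_le hp1 with h1 | h1
    · subst h1; simpa using Real.exp_pos x
    · nlinarith [mul_nonneg hp0 (Real.exp_pos x).le]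
  set g : ℝ → ℝ := fun x => x / 4 + p - p * Real.exp x / (1 - p + p * Real.exp x) with hgdef
  have hDd : ∀ x : ℝ, HasDerivAt (fun x => 1 - p + p * Real.exp x) (p * Real.exp x) x := by
    intro x
    exact ((Real.hasDerivAt_exp x).const_mul p).const_add (1 - p)
  have hg' : ∀ x : ℝ, HasDerivAt g
      (1 / 4 - p * Real.exp x * (1 - p) / (1 - p + p * Real.exp x) ^ 2) x := by
    intro x
    have hq : HasDerivAt (fun x => p * Real.exp x / (1 - p + p * Real.exp x))
        ((p * Real.exp x * (1 - p + p * Real.exp x) - p * Real.exp x * (p * Real.exp x)) /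
          (1 - p + p * Real.exp x) ^ 2) x :=
      ((Real.hasDerivAt_exp x).const_mul p).div (hDd x) (hD x).ne'
    have h1 : HasDerivAt (fun x : ℝ => x / 4 + p) (1 / 4) x := by
      simpa using ((hasDerivAt_id x).div_const 4).add_const p
    have := h1.sub hq
    refine this.congr_deriv ?_
    have := (hD x).ne'
    field_simp
    ring
  have hgmono : Monotone g := by
    apply monotone_of_deriv_nonneg (fun x => (hg' x).differentiableAt)
    intro x
    rw [(hg' x).deriv]
    have h2 : p * Real.exp x * (1 - p) / (1 - p + p * Real.exp x) ^ 2 ≤ 1 / 4 := by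
      rw [div_le_iff₀ (pow_pos (hD x) 2)]
      nlinarith [sq_nonneg ((1 - p) - p * Real.exp x)]
    linarith
  have hg0 : g 0 = 0 := by
    simp only [hgdef, Real.exp_zero, mul_one]
    have : 1 - p + p = 1 := by ring
    rw [this]
    norm_num
  set h : ℝ → ℝ := fun x => x ^ 2 / 8 + p * x - Real.log (1 - p + p * Real.exp x) with hhdef
  have hh' : ∀ x : ℝ, HasDerivAt h (g x) x := by
    intro x
    have h1 : HasDerivAt (fun x : ℝ => x ^ 2 / 8 + p * x) (x / 4 + p) x := by
      have := ((hasDerivAt_pow 2 x).div_const 8).add ((hasDerivAt_id x).const_mul p)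
      refine this.congr_deriv ?_
      simp; ring
    have h2 : HasDerivAt (fun x => Real.log (1 - p + p * Real.exp x))
        (p * Real.exp x / (1 - p + p * Real.exp x)) x := (hDd x).log (hD x).ne'
    exact h1.sub h2
  have hdiff : Differentiable ℝ h := fun x => (hh' x).differentiableAt
  have hh0 : h 0 = 0 := by
    simp only [hhdef, Real.exp_zero, mul_one]
    have : 1 - p + p = 1 := by ring
    rw [this]
    simp
  have hhnonneg : 0 ≤ h u := by
    rcases le_or_gt 0 u with hu | hu
    · have := monotoneOn_of_deriv_nonneg (convex_Ici 0) hdiff.continuous.continuousOn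
        (hdiff.differentiableOn) (fun x hx => by
          rw [(hh' x).deriv]
          rw [interior_Ici] at hx
          have := hgmono (le_of_lt hx)
          rw [hg0] at this
          exact this)
      have := this (Set.self_mem_Ici) (Set.mem_Ici.mpr hu) hu
      rwa [hh0] at this
    · have := antitoneOn_of_deriv_nonpos (convex_Iic 0) hdiff.continuous.continuousOn
        (hdiff.differentiableOn) (fun x hx => by
          rw [(hh' x).deriv]
          rw [interior_Iic] at hx
          have := hgmono (le_of_lt hx)
          rw [hg0] at this
          exact this)
      have := this (Set.mem_Iic.mpr hu.le) (Set.self_mem_Iic) hu.le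
      rwa [hh0] at this
  have hlog : Real.log (1 - p + p * Real.exp u) ≤ u ^ 2 / 8 + p * u := by
    have : h u = u ^ 2 / 8 + p * u - Real.log (1 - p + p * Real.exp u) := rfl
    linarith [hhnonneg.trans_eq this]
  calc 1 - p + p * Real.exp u = Real.exp (Real.log (1 - p + p * Real.exp u)) :=
        (Real.exp_log (hD u)).symm
    _ ≤ _ := Real.exp_le_exp.mpr hlog

lemma hoeff_measure {Ω : Type*} [MeasurableSpace Ω] (ν : Measure Ω) [IsFiniteMeasure ν]
    {X : Ω → ℝ} {s a b : ℝ} (hX : Integrable X ν)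
    (hXe : Integrable (fun ω => Real.exp (s * X ω)) ν)
    (hab : ∀ᵐ ω ∂ν, X ω ∈ Set.Icc a b) (hmean : ∫ ω, X ω ∂ν = 0) :
    ∫ ω, Real.exp (s * X ω) ∂ν ≤
      (ν Set.univ).toReal * Real.exp (s ^ 2 * (b - a) ^ 2 / 8) := by
  by_cases hν : ν = 0
  · subst hν
    simp
  · have hw : 0 < (ν Set.univ).toReal :=
      ENNReal.toReal_pos (MeasureTheory.Measure.measure_univ_ne_zero.mpr hν) (measure_ne_top ν _)
    set w : ℝ := (ν Set.univ).toReal with hwdef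
    have hbw : 0 ≤ b * w := by
      have h1 : ∫ ω, X ω ∂ν ≤ ∫ _ω, b ∂ν :=
        integral_mono_ae hX (integrable_const b) (hab.mono fun ω h => h.2)
      rw [hmean, integral_const, measureReal_def] at h1
      simpa [mul_comm] using h1
    have haw : a * w ≤ 0 := by
      have h1 : ∫ _ω, a ∂ν ≤ ∫ ω, X ω ∂ν :=
        integral_mono_ae (integrable_const a) hX (hab.mono fun ω h => h.1)
      rw [hmean, integral_const, measureReal_def] at h1
      simpa [mul_comm] using h1
    have hb0 : 0 ≤ b := by nlinarith
    have ha0 : a ≤ 0 := by nlinarith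
    rcases le_or_gt b a with hba | hba
    · have ha : a = 0 := le_antisymm ha0 (hb0.trans hba)
      have hbb : b = 0 := le_antisymm (hba.trans ha0) hb0
      have hX0 : ∀ᵐ ω ∂ν, Real.exp (s * X ω) = 1 := by
        filter_upwards [hab] with ω h
        have : X ω = 0 := le_antisymm (hbb ▸ h.2) (ha ▸ h.1)
        simp [this]
      rw [integral_congr_ae hX0, integral_const, smul_eq_mul, mul_one, measureReal_def]
      have h1 : (1 : ℝ) ≤ Real.exp (s ^ 2 * (b - a) ^ 2 / 8) := Real.one_le_exp (by positivity)
      nlinarith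
    · have hba' : (0:ℝ) < b - a := by linarith
      set c1 : ℝ := (b * Real.exp (s * a) - a * Real.exp (s * b)) / (b - a) with hc1
      set c2 : ℝ := (Real.exp (s * b) - Real.exp (s * a)) / (b - a) with hc2
      -- pointwise convexity bound
      have hpt : ∀ᵐ ω ∂ν, Real.exp (s * X ω) ≤ c1 + c2 * X ω := by
        filter_upwards [hab] with ω h
        obtain ⟨hxa, hxb⟩ := h
        set θ : ℝ := (b - X ω) / (b - a) with hθ
        have hθ0 : 0 ≤ θ := div_nonneg (by linarith) hba'.le
        have hθ1 : 0 ≤ 1 - θ := by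
          have : θ ≤ 1 := by rw [hθ, div_le_one hba']; linarith
          linarith
        have hcvx := convexOn_exp.2 (Set.mem_univ (s * a)) (Set.mem_univ (s * b))
          hθ0 hθ1 (by ring)
        have harg : θ * (s * a) + (1 - θ) * (s * b) = s * X ω := by
          rw [hθ]; field_simp; ring
        rw [smul_eq_mul, smul_eq_mul, harg] at hcvx
        have : θ * Real.exp (s * a) + (1 - θ) * Real.exp (s * b) = c1 + c2 * X ω := by
          rw [hθ, hc1, hc2]; field_simp; ring
        calc Real.exp (s * X ω) ≤ θ • Real.exp (s * a) + (1 - θ) • Real.exp (s * b) := hcvx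
          _ = c1 + c2 * X ω := by rw [smul_eq_mul, smul_eq_mul]; exact this
      -- integrate
      have hint : ∫ ω, Real.exp (s * X ω) ∂ν ≤ ∫ ω, c1 + c2 * X ω ∂ν :=
        integral_mono_ae hXe ((integrable_const c1).add (hX.const_mul c2)) hpt
      have hval : ∫ ω, c1 + c2 * X ω ∂ν = w * c1 := by
        rw [integral_add (integrable_const c1) (hX.const_mul c2), integral_const,
          integral_const_mul, hmean, smul_eq_mul, measureReal_def]
        ring
      -- the key scalar inequality
      set p : ℝ := -a / (b - a) with hpdef
      have hp0 : 0 ≤ p := div_nonneg (by linarith) hba'.le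
      have hp1 : p ≤ 1 := by rw [hpdef, div_le_one hba']; linarith
      have hkey : c1 ≤ Real.exp (s ^ 2 * (b - a) ^ 2 / 8) := by
        have h := hoeff_core hp0 hp1 (s * (b - a))
        have e1 : Real.exp (s * b) = Real.exp (s * a) * Real.exp (s * (b - a)) := by
          rw [← Real.exp_add]; ring_nf
        have step1 : c1 = (1 - p + p * Real.exp (s * (b - a))) * Real.exp (s * a) := by
          rw [hc1, hpdef, e1]
          field_simp
          ring
        have step2 : (1 - p + p * Real.exp (s * (b - a))) * Real.exp (s * a) ≤
            Real.exp ((s * (b - a)) ^ 2 / 8 + p * (s * (b - a))) * Real.exp (s * a) :=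
          mul_le_mul_of_nonneg_right h (Real.exp_pos _).le
        have step3 : Real.exp ((s * (b - a)) ^ 2 / 8 + p * (s * (b - a))) * Real.exp (s * a) =
            Real.exp (s ^ 2 * (b - a) ^ 2 / 8) := by
          rw [← Real.exp_add]
          congr 1
          rw [hpdef]
          field_simp
          ring
        rw [step1]
        rw [← step3]
        exact step2
      calc ∫ ω, Real.exp (s * X ω) ∂ν ≤ w * c1 := hint.trans_eq hval
        _ ≤ w * Real.exp (s ^ 2 * (b - a) ^ 2 / 8) :=
            mul_le_mul_of_nonneg_left hkey hw.le

section atoms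
variable {Ω : Type*} [Fintype Ω] {m' : MeasurableSpace Ω}

lemma mem_condAtom (m' : MeasurableSpace Ω) (ω : Ω) : ω ∈ condAtom m' ω :=
  fun _s hs => hs.2

lemma condAtom_subset {s : Set Ω} {ω : Ω} (hs : MeasurableSet[m'] s) (hω : ω ∈ s) :
    condAtom m' ω ⊆ s :=
  Set.sInter_subset_of_mem ⟨hs, hω⟩

lemma measurableSet_condAtom (m' : MeasurableSpace Ω) (ω : Ω) :
    MeasurableSet[m'] (condAtom m' ω) :=
  MeasurableSet.sInter (Set.to_countable _) (fun _s hs => hs.1)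

lemma condAtom_subset_of_mem {ω ω' : Ω} (h : ω' ∈ condAtom m' ω) :
    condAtom m' ω' ⊆ condAtom m' ω := by
  intro x hx s hs
  exact hx s ⟨hs.1, condAtom_subset hs.1 hs.2 h⟩

lemma condAtom_eq_of_mem {ω ω' : Ω} (h : ω' ∈ condAtom m' ω) :
    condAtom m' ω' = condAtom m' ω := by
  have hmem : ω ∈ condAtom m' ω' := by
    by_contra hc
    obtain ⟨s, hs, hω's⟩ : ∃ s, (MeasurableSet[m'] s ∧ ω' ∈ s) ∧ ω ∉ s := by
      by_contra hc2
      push_neg at hc2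
      exact hc (fun s hs => hc2 s ⟨hs.1, hs.2⟩)
    have hsub : condAtom m' ω ⊆ sᶜ := condAtom_subset hs.1.compl hω's
    exact (hsub h) hs.2
  exact subset_antisymm (condAtom_subset_of_mem h) (condAtom_subset_of_mem hmem)

lemma apply_eq_on_condAtom {g : Ω → ℝ} (hg : Measurable[m'] g) {ω ω' : Ω}
    (h : ω' ∈ condAtom m' ω) : g ω' = g ω := by
  have : condAtom m' ω ⊆ g ⁻¹' {g ω} :=
    condAtom_subset (hg (measurableSet_singleton (g ω))) rfl
  exact this h

lemma measurable_of_constOn {g : Ω → ℝ}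
    (h : ∀ ω ω', ω' ∈ condAtom m' ω → g ω' = g ω) : Measurable[m'] g := by
  intro t _ht
  have : g ⁻¹' t = ⋃ ω ∈ (g ⁻¹' t), condAtom m' ω := by
    apply subset_antisymm
    · intro x hx
      exact Set.mem_biUnion hx (mem_condAtom m' x)
    · intro x hx
      obtain ⟨ω, hω, hxω⟩ := Set.mem_iUnion₂.mp hx
      have := h ω x hxω
      simpa [Set.mem_preimage, this] using hω
  rw [this]
  exact Set.Finite.measurableSet_biUnion (Set.toFinite _)
    (fun ω _ => measurableSet_condAtom m' ω)

lemma condRange_eq_on_condAtom {mΩ : MeasurableSpace Ω} (μ : Measure Ω) (f : Ω → ℝ)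
    {ω ω' : Ω} (h : ω' ∈ condAtom m' ω) :
    condRange μ m' f ω' = condRange μ m' f ω := by
  unfold condRange
  rw [condAtom_eq_of_mem h]

lemma measurable_condRange {mΩ : MeasurableSpace Ω} (μ : Measure Ω) (f : Ω → ℝ) :
    Measurable[m'] (condRange μ m' f) :=
  measurable_of_constOn (fun _ω _ω' h => condRange_eq_on_condAtom μ f h)

lemma condRange_neg {mΩ : MeasurableSpace Ω} (μ : Measure Ω) (f : Ω → ℝ) :
    condRange μ m' (fun ω => -f ω) = condRange μ m' f := by
  funext ω
  unfold condRange
  simp only [neg_neg]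
  exact add_comm _ _

-- singleton outer measure equals measure of its ambient atom
lemma measure_singleton_eq_condAtom {mΩ : MeasurableSpace Ω} (μ : Measure Ω) (ω : Ω) :
    μ {ω} = μ (condAtom mΩ ω) := by
  apply le_antisymm
  · exact measure_mono (Set.singleton_subset_iff.mpr (mem_condAtom mΩ ω))
  · conv_rhs => rw [measure_eq_iInf]
    refine le_iInf fun t => le_iInf fun ht => le_iInf fun htm => ?_
    exact measure_mono (condAtom_subset htm (ht rfl))

lemma measure_null_points {mΩ : MeasurableSpace Ω} (μ : Measure Ω) :
    μ {ω | μ {ω} = 0} = 0 := by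
  have : {ω | μ {ω} = 0} ⊆ ⋃ ω' : {x : Ω // μ {x} = 0}, {ω'.1} := by
    intro x hx
    exact Set.mem_iUnion.mpr ⟨⟨x, hx⟩, rfl⟩
  apply measure_mono_null this
  exact measure_iUnion_null (fun ω' => ω'.2)

lemma exists_pos_point {mΩ : MeasurableSpace Ω} {μ : Measure Ω} {A : Set Ω}
    (hA : μ A ≠ 0) : ∃ ω' ∈ A, μ {ω'} ≠ 0 := by
  by_contra hc
  push_neg at hc
  exact hA (measure_mono_null (fun x hx => hc x hx) (measure_null_points μ))

end atoms

section finaux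
variable {Ω : Type*} [Fintype Ω]


lemma integrable_fin {mΩ : MeasurableSpace Ω} (μ : Measure Ω) [IsFiniteMeasure μ] {f : Ω → ℝ}
    (hf : Measurable f) : Integrable f μ := by
  obtain ⟨C, hC⟩ := Finite.exists_le (fun ω => ‖f ω‖)
  exact ⟨hf.aestronglyMeasurable, HasFiniteIntegral.of_bounded (ae_of_all μ hC)⟩

lemma integral_eq_sum_condAtoms [DecidableEq (Set Ω)] {m' mΩ : MeasurableSpace Ω}
    (μ : Measure Ω) [IsFiniteMeasure μ]
    (hm' : m' ≤ mΩ) (f : Ω → ℝ) (hf : Integrable f μ) :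
    ∫ ω, f ω ∂μ = ∑ A ∈ Finset.image (condAtom m') Finset.univ, ∫ ω in A, f ω ∂μ := by
  classical
  have hcover : (⋃ A ∈ Finset.image (condAtom m') Finset.univ, (id A : Set Ω)) = Set.univ := by
    apply Set.eq_univ_of_forall
    intro x
    exact Set.mem_biUnion (Finset.mem_image_of_mem _ (Finset.mem_univ x)) (mem_condAtom m' x)
  have hdisj : Set.Pairwise ↑(Finset.image (condAtom m') Finset.univ)
      (Function.onFun Disjoint (id : Set Ω → Set Ω)) := by
    intro A hA B hB hAB
    obtain ⟨a, _, rfl⟩ := Finset.mem_image.mp (Finset.mem_coe.mp hA)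
    obtain ⟨b, _, rfl⟩ := Finset.mem_image.mp (Finset.mem_coe.mp hB)
    simp only [Function.onFun, id]
    rw [Set.disjoint_left]
    intro x hxa hxb
    exact hAB (by rw [← condAtom_eq_of_mem hxa, condAtom_eq_of_mem hxb])
  have h := integral_biUnion_finset (μ := μ) (f := f)
    (Finset.image (condAtom m') Finset.univ) (s := id)
    (fun A hA => by
      obtain ⟨a, _, rfl⟩ := Finset.mem_image.mp hA
      exact hm' _ (measurableSet_condAtom m' a))
    hdisj (fun A _ => hf.integrableOn)
  rw [hcover] at h
  rw [setIntegral_univ] at h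
  simpa using h

lemma mcd_estimate {mΩ : MeasurableSpace Ω} (μ : Measure Ω) [IsProbabilityMeasure μ]
    (n : ℕ) (F : ℕ → MeasurableSpace Ω) (Y : ℕ → Ω → ℝ)
    (hFmono : Monotone F) (hFle : ∀ i, F i ≤ mΩ)
    (hadapted : ∀ i, i ≤ n → StronglyMeasurable[F i] (Y i))
    (hmart : ∀ j, 1 ≤ j → j ≤ n → μ[Y j | F (j - 1)] =ᵐ[μ] Y (j - 1))
    (c : ℝ) (hc : ∀ ω, Y 0 ω = c) (s : ℝ) :
    ∫ ω, Real.exp (s * (Y n ω - c) -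
      s ^ 2 / 8 * ∑ j ∈ Finset.Icc 1 n, (condRange μ (F (j - 1)) (Y j) ω) ^ 2) ∂μ ≤ 1 := by
  classical
  set Z : ℕ → Ω → ℝ := fun k ω => Real.exp (s * (Y k ω - c) -
      s ^ 2 / 8 * ∑ j ∈ Finset.Icc 1 k, (condRange μ (F (j - 1)) (Y j) ω) ^ 2) with hZdef
  -- measurability toolkit
  have hYm : ∀ j, j ≤ n → Measurable[mΩ] (Y j) :=
    fun j hj => ((hadapted j hj).measurable).mono (hFle j) le_rfl
  have hRm : ∀ j : ℕ, Measurable[mΩ] (fun ω => condRange μ (F (j - 1)) (Y j) ω) :=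
    fun j => (measurable_condRange (m' := F (j - 1)) μ (Y j)).mono (hFle (j - 1)) le_rfl
  have hZm : ∀ k, k ≤ n → Measurable[mΩ] (Z k) := by
    intro k hk
    apply Measurable.exp
    exact (((hYm k hk).sub_const c).const_mul s).sub
      ((Finset.measurable_sum _ (fun j _ => (hRm j).pow_const 2)).const_mul (s ^ 2 / 8))
  suffices H : ∀ k, k ≤ n → ∫ ω, Z k ω ∂μ ≤ 1 from H n le_rfl
  intro k
  induction k with
  | zero =>
    intro _
    have hZ0 : Z 0 = fun _ => (1 : ℝ) := by
      funext ω
      simp [hZdef, hc ω, Finset.Icc_eq_empty (by omega : ¬ (1:ℕ) ≤ 0)]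
    rw [hZ0]
    simp
  | succ k ih =>
    intro hk1
    have hk : k ≤ n := by omega
    refine le_trans ?_ (ih hk)
    rw [integral_eq_sum_condAtoms μ (hFle k) _ (integrable_fin μ (hZm _ hk1)),
      integral_eq_sum_condAtoms μ (hFle k) _ (integrable_fin μ (hZm _ hk))]
    apply Finset.sum_le_sum
    intro A hAmem
    obtain ⟨ω₀, -, hAeq⟩ := Finset.mem_image.mp hAmem
    subst hAeq
    have hAm' : MeasurableSet[F k] (condAtom (F k) ω₀) := measurableSet_condAtom (F k) ω₀
    have hAmΩ : MeasurableSet[mΩ] (condAtom (F k) ω₀) := hFle k _ hAm'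
    by_cases hA0 : μ (condAtom (F k) ω₀) = 0
    · have h0 : μ.restrict (condAtom (F k) ω₀) = 0 := Measure.restrict_eq_zero.mpr hA0
      simp only [h0, integral_zero_measure, le_refl]
    -- constants on the atom
    have hYk : ∀ x ∈ condAtom (F k) ω₀, Y k x = Y k ω₀ :=
      fun x hx => apply_eq_on_condAtom (hadapted k hk).measurable hx
    have hRj : ∀ j, 1 ≤ j → j ≤ k + 1 → ∀ x ∈ condAtom (F k) ω₀,
        condRange μ (F (j - 1)) (Y j) x = condRange μ (F (j - 1)) (Y j) ω₀ := by
      intro j h1 h2 x hx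
      exact apply_eq_on_condAtom
        ((measurable_condRange (m' := F (j-1)) μ (Y j)).mono
          (hFmono (show j - 1 ≤ k by omega)) le_rfl) hx
    have hZk : ∀ x ∈ condAtom (F k) ω₀, Z k x = Z k ω₀ := by
      intro x hx
      simp only [hZdef]
      rw [hYk x hx, Finset.sum_congr rfl (fun j hj => by
        obtain ⟨hj1, hj2⟩ := Finset.mem_Icc.mp hj
        rw [hRj j hj1 (by omega) x hx])]
    set SB := {y | ∃ ω' ∈ condAtom (F k) ω₀, μ {ω'} ≠ 0 ∧ Y (k+1) ω' = y} with hSBdef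
    set SA := {y | ∃ ω' ∈ condAtom (F k) ω₀, μ {ω'} ≠ 0 ∧ -Y (k+1) ω' = y} with hSAdef
    have hRv : condRange μ (F (k + 1 - 1)) (Y (k+1)) ω₀ = sSup SB + sSup SA := rfl
    obtain ⟨ωp, hωpA, hωpμ⟩ := exists_pos_point hA0
    have hSBbdd : BddAbove SB := Set.Finite.bddAbove (Set.Finite.subset
      (Set.finite_range (Y (k+1))) (by rintro y ⟨ω', -, -, rfl⟩; exact ⟨ω', rfl⟩))
    have hSAbdd : BddAbove SA := Set.Finite.bddAbove (Set.Finite.subset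
      (Set.finite_range (fun ω' => -Y (k+1) ω')) (by rintro y ⟨ω', -, -, rfl⟩; exact ⟨ω', rfl⟩))
    set c' := Y k ω₀ with hc'def
    -- a.e. bounds on the atom
    have hae : ∀ᵐ x ∂(μ.restrict (condAtom (F k) ω₀)),
        (Y (k+1) x - c') ∈ Set.Icc (-sSup SA - c') (sSup SB - c') := by
      rw [ae_restrict_iff' hAmΩ]
      have h1 : ∀ᵐ x ∂μ, μ {x} ≠ 0 := by
        rw [ae_iff]
        simpa using measure_null_points μ
      filter_upwards [h1] with x hx hxA
      have hb : Y (k+1) x ≤ sSup SB := le_csSup hSBbdd ⟨x, hxA, hx, rfl⟩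
      have ha : -Y (k+1) x ≤ sSup SA := le_csSup hSAbdd ⟨x, hxA, hx, rfl⟩
      constructor <;> [linarith; linarith]
    -- mean zero on the atom
    have hYint : Integrable (Y (k+1)) μ := integrable_fin μ (hYm _ hk1)
    have hmean : ∫ x in condAtom (F k) ω₀, (Y (k+1) x - c') ∂μ = 0 := by
      have h1 : ∫ x in condAtom (F k) ω₀, (μ[Y (k+1)|F k]) x ∂μ = ∫ x in condAtom (F k) ω₀, Y (k+1) x ∂μ :=
        setIntegral_condExp (hFle k) hYint hAm'
      have h2 : ∫ x in condAtom (F k) ω₀, (μ[Y (k+1)|F k]) x ∂μ = ∫ x in condAtom (F k) ω₀, Y k x ∂μ :=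
        setIntegral_congr_ae hAmΩ ((hmart (k+1) (by omega) hk1).mono (fun x hx _ => hx))
      have h3 : ∫ x in condAtom (F k) ω₀, Y k x ∂μ = (μ (condAtom (F k) ω₀)).toReal * c' := by
        rw [setIntegral_congr_fun hAmΩ (fun x hx => hYk x hx), setIntegral_const, smul_eq_mul, measureReal_def]
      rw [integral_sub hYint.restrict (integrable_const c'), ← h1, h2, h3,
        setIntegral_const, smul_eq_mul, measureReal_def]
      ring
    -- split Z (k+1) on the atom
    have hZsplit : ∀ x ∈ condAtom (F k) ω₀, Z (k+1) x =
        (Z k ω₀ * Real.exp (-(s^2/8) * (sSup SB + sSup SA)^2)) *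
          Real.exp (s * (Y (k+1) x - c')) := by
      intro x hx
      have e1 : Z (k+1) x = Z k x *
          (Real.exp (-(s^2/8) * (condRange μ (F (k + 1 - 1)) (Y (k+1)) x)^2) *
            Real.exp (s * (Y (k+1) x - Y k x))) := by
        simp only [hZdef]
        rw [← Real.exp_add, ← Real.exp_add]
        congr 1
        rw [Finset.sum_Icc_succ_top (by omega : 1 ≤ k + 1)]
        ring
      rw [e1, hZk x hx, hRj (k+1) (by omega) le_rfl x hx, hRv, hYk x hx]
      ring
    have hZpos : (0:ℝ) < Z k ω₀ := by simp only [hZdef]; exact Real.exp_pos _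
    have hXint : Integrable (fun x => Y (k+1) x - c') μ :=
      integrable_fin μ ((hYm _ hk1).sub_const c')
    have hXeint : Integrable (fun x => Real.exp (s * (Y (k+1) x - c'))) μ :=
      integrable_fin μ (Measurable.exp (((hYm _ hk1).sub_const c').const_mul s))
    have hhoeff := hoeff_measure (μ.restrict (condAtom (F k) ω₀))
      (X := fun x => Y (k+1) x - c') hXint.restrict hXeint.restrict hae hmean
    rw [Measure.restrict_apply_univ] at hhoeff
    have hba : sSup SB - c' - (-sSup SA - c') = sSup SB + sSup SA := by ring
    rw [hba] at hhoeff
    calc ∫ x in condAtom (F k) ω₀, Z (k+1) x ∂μ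
        = ∫ x in condAtom (F k) ω₀, (Z k ω₀ * Real.exp (-(s^2/8) * (sSup SB + sSup SA)^2)) *
            Real.exp (s * (Y (k+1) x - c')) ∂μ := setIntegral_congr_fun hAmΩ hZsplit
      _ = (Z k ω₀ * Real.exp (-(s^2/8) * (sSup SB + sSup SA)^2)) *
            ∫ x in condAtom (F k) ω₀, Real.exp (s * (Y (k+1) x - c')) ∂μ := integral_const_mul _ _
      _ ≤ (Z k ω₀ * Real.exp (-(s^2/8) * (sSup SB + sSup SA)^2)) *
            ((μ (condAtom (F k) ω₀)).toReal * Real.exp (s^2 * (sSup SB + sSup SA)^2 / 8)) := by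
          apply mul_le_mul_of_nonneg_left hhoeff (by positivity)
      _ = Z k ω₀ * (μ (condAtom (F k) ω₀)).toReal := by
          rw [mul_mul_mul_comm, ← Real.exp_add,
            show -(s^2/8) * (sSup SB + sSup SA)^2 + s^2 * (sSup SB + sSup SA)^2 / 8 = 0 by ring,
            Real.exp_zero, mul_one]
      _ = ∫ x in condAtom (F k) ω₀, Z k x ∂μ := by
          rw [setIntegral_congr_fun hAmΩ hZk, setIntegral_const, smul_eq_mul, mul_comm, measureReal_def]



lemma mcd_onesided {mΩ : MeasurableSpace Ω}
    (μ : Measure Ω) [IsProbabilityMeasure μ]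
    (n : ℕ) (F : ℕ → MeasurableSpace Ω) (Y : ℕ → Ω → ℝ)
    (hFmono : Monotone F) (hFle : ∀ i, F i ≤ mΩ) (hF0 : F 0 = ⊥)
    (hadapted : ∀ i, i ≤ n → StronglyMeasurable[F i] (Y i))
    (hmart : ∀ j, 1 ≤ j → j ≤ n → μ[Y j | F (j - 1)] =ᵐ[μ] Y (j - 1))
    (r : ℝ)
    (hran : ∀ᵐ ω ∂μ, ∑ j ∈ Finset.Icc 1 n, (condRange μ (F (j - 1)) (Y j) ω) ^ 2 ≤ r ^ 2) :
    ∀ t : ℝ, 0 < t →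
      (μ {ω | t ≤ Y n ω - ∫ ω', Y 0 ω' ∂μ}).toReal ≤ Real.exp (-2 * t ^ 2 / r ^ 2) := by
  intro t ht
  obtain ⟨c, hc⟩ := stronglyMeasurable_bot_iff.mp (hF0 ▸ hadapted 0 (Nat.zero_le n))
  have hcint : ∫ ω', Y 0 ω' ∂μ = c := by rw [hc]; simp
  rw [hcint]
  by_cases hr : r = 0
  · subst hr
    have h1 : (μ {ω | t ≤ Y n ω - c}).toReal ≤ 1 := by
      calc (μ {ω | t ≤ Y n ω - c}).toReal
          ≤ (μ Set.univ).toReal :=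
            ENNReal.toReal_mono (measure_ne_top μ _) (measure_mono (Set.subset_univ _))
        _ = 1 := by simp
    simpa using h1
  · have hr2 : (0:ℝ) < r ^ 2 := by positivity
    set s : ℝ := 4 * t / r ^ 2 with hs
    have hs0 : 0 ≤ s := by positivity
    -- measurability
    have hYm : Measurable[mΩ] (Y n) := ((hadapted n le_rfl).measurable).mono (hFle n) le_rfl
    have hRm : ∀ j : ℕ, Measurable[mΩ] (fun ω => condRange μ (F (j - 1)) (Y j) ω) :=
      fun j => (measurable_condRange (m' := F (j - 1)) (mΩ := mΩ) μ (Y j)).mono (hFle (j - 1)) le_rfl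
    have hWm : Measurable[mΩ] (fun ω => Real.exp (s * (Y n ω - c) -
        s ^ 2 / 8 * ∑ j ∈ Finset.Icc 1 n, (condRange μ (F (j - 1)) (Y j) ω) ^ 2)) :=
      Measurable.exp (((hYm.sub_const c).const_mul s).sub
        ((Finset.measurable_sum _ (fun j _ => (hRm j).pow_const 2)).const_mul (s ^ 2 / 8)))
    have hXe : Measurable[mΩ] (fun ω => Real.exp (s * (Y n ω - c))) :=
      Measurable.exp ((hYm.sub_const c).const_mul s)
    -- mgf bound
    have hest := mcd_estimate μ n F Y hFmono hFle hadapted hmart c (fun ω => by rw [hc]) s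
    have hmgf : ∫ ω, Real.exp (s * (Y n ω - c)) ∂μ ≤ Real.exp (s ^ 2 * r ^ 2 / 8) := by
      have hae2 : ∀ᵐ ω ∂μ, Real.exp (s * (Y n ω - c)) ≤
          Real.exp (s * (Y n ω - c) -
            s ^ 2 / 8 * ∑ j ∈ Finset.Icc 1 n, (condRange μ (F (j - 1)) (Y j) ω) ^ 2) *
          Real.exp (s ^ 2 * r ^ 2 / 8) := by
        filter_upwards [hran] with ω hω
        rw [← Real.exp_add]
        apply Real.exp_le_exp.mpr
        nlinarith [sq_nonneg s]
      calc ∫ ω, Real.exp (s * (Y n ω - c)) ∂μ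
          ≤ ∫ ω, Real.exp (s * (Y n ω - c) -
              s ^ 2 / 8 * ∑ j ∈ Finset.Icc 1 n, (condRange μ (F (j - 1)) (Y j) ω) ^ 2) *
              Real.exp (s ^ 2 * r ^ 2 / 8) ∂μ :=
            integral_mono_ae (integrable_fin μ hXe)
              ((integrable_fin μ hWm).mul_const _) hae2
        _ = (∫ ω, Real.exp (s * (Y n ω - c) -
              s ^ 2 / 8 * ∑ j ∈ Finset.Icc 1 n, (condRange μ (F (j - 1)) (Y j) ω) ^ 2) ∂μ) *
              Real.exp (s ^ 2 * r ^ 2 / 8) := integral_mul_const _ _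
        _ ≤ 1 * Real.exp (s ^ 2 * r ^ 2 / 8) :=
            mul_le_mul_of_nonneg_right hest (Real.exp_pos _).le
        _ = Real.exp (s ^ 2 * r ^ 2 / 8) := one_mul _
    have hcher := ProbabilityTheory.measure_ge_le_exp_mul_mgf (X := fun ω => Y n ω - c)
      (μ := μ) t hs0 (integrable_fin μ hXe)
    have hmgf' : ProbabilityTheory.mgf (fun ω => Y n ω - c) μ s ≤ Real.exp (s ^ 2 * r ^ 2 / 8) :=
      hmgf
    calc (μ {ω | t ≤ Y n ω - c}).toReal
        ≤ Real.exp (-s * t) * ProbabilityTheory.mgf (fun ω => Y n ω - c) μ s := hcher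
      _ ≤ Real.exp (-s * t) * Real.exp (s ^ 2 * r ^ 2 / 8) :=
          mul_le_mul_of_nonneg_left hmgf' (Real.exp_pos _).le
      _ = Real.exp (-2 * t ^ 2 / r ^ 2) := by
          rw [← Real.exp_add]
          congr 1
          rw [hs]
          field_simp
          ring


end finaux

theorem mcdiarmid_tail_bound {Ω : Type*} [Fintype Ω] {mΩ : MeasurableSpace Ω}
    (μ : Measure Ω) [IsProbabilityMeasure μ]
    (n : ℕ) (F : ℕ → MeasurableSpace Ω) (Y : ℕ → Ω → ℝ)
    -- `F 0 ⊆ F 1 ⊆ ⋯ ⊆ F n` is a filter of σ-subfields of `mΩ` with `F 0 = {∅, Ω}`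
    (hFmono : Monotone F) (hFle : ∀ i, F i ≤ mΩ) (hF0 : F 0 = ⊥)
    -- `Y 0, …, Y n` is a martingale with respect to `F`
    (hadapted : ∀ i, i ≤ n → StronglyMeasurable[F i] (Y i))
    (hmart : ∀ j, 1 ≤ j → j ≤ n → μ[Y j | F (j - 1)] =ᵐ[μ] Y (j - 1))
    (r : ℝ)
    (hran : ∀ᵐ ω ∂μ, ∑ j ∈ Finset.Icc 1 n, (condRange μ (F (j - 1)) (Y j) ω) ^ 2 ≤ r ^ 2) :
    ∀ t : ℝ, 0 < t →
      (μ {ω | t ≤ |Y n ω - ∫ ω', Y 0 ω' ∂μ|}).toReal ≤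
        2 * Real.exp (-2 * t ^ 2 / r ^ 2) := by

  intro t ht
  have h1 := mcd_onesided μ n F Y hFmono hFle hF0 hadapted hmart r hran t ht
  have h2 := mcd_onesided μ n F (fun j ω => -Y j ω) hFmono hFle hF0
    (fun i hi => (hadapted i hi).neg)
    (fun j hj1 hj2 => (condExp_neg (Y j) _).trans ((hmart j hj1 hj2).neg))
    r (by simpa only [condRange_neg (mΩ := mΩ)] using hran) t ht
  have hneg : ∫ ω', -Y 0 ω' ∂μ = -∫ ω', Y 0 ω' ∂μ := integral_neg _
  rw [hneg] at h2
  set c := ∫ ω', Y 0 ω' ∂μ with hcdef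
  have hsub : {ω | t ≤ |Y n ω - c|} ⊆
      {ω | t ≤ Y n ω - c} ∪ {ω | t ≤ -Y n ω - -c} := by
    intro ω hω
    have hω' : t ≤ |Y n ω - c| := hω
    rcases le_abs.mp hω' with h | h
    · exact Or.inl h
    · exact Or.inr (by simp only [Set.mem_setOf_eq]; linarith)
  calc (μ {ω | t ≤ |Y n ω - c|}).toReal
      ≤ (μ ({ω | t ≤ Y n ω - c} ∪ {ω | t ≤ -Y n ω - -c})).toReal :=
        ENNReal.toReal_mono (measure_ne_top μ _) (measure_mono hsub)
    _ ≤ (μ {ω | t ≤ Y n ω - c} + μ {ω | t ≤ -Y n ω - -c}).toReal :=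
        ENNReal.toReal_mono
          (ENNReal.add_ne_top.mpr ⟨measure_ne_top μ _, measure_ne_top μ _⟩)
          (measure_union_le _ _)
    _ ≤ (μ {ω | t ≤ Y n ω - c}).toReal + (μ {ω | t ≤ -Y n ω - -c}).toReal :=
        ENNReal.toReal_add_le
    _ ≤ Real.exp (-2 * t ^ 2 / r ^ 2) + Real.exp (-2 * t ^ 2 / r ^ 2) := add_le_add h1 h2
    _ = 2 * Real.exp (-2 * t ^ 2 / r ^ 2) := by ring
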